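/- arXiv:1805.01863 — 8 statements merged into one kernel-verified Lean document; each statement's English description precedes it below -/
import Mathlib

section
/- Fix c ∈ γ with 0 < p_C(c) < ∞. Suppose the conditional independence identity J(A,B|C)(a,b,c) = J(A|C)(a,c) * J(B|C)(b,c) holds for all a ∈ α and b ∈ β. Then for every a ∈ α and b ∈ β with 0 < p_BC(b,c) < ∞ and ∫⁻ p a b' c ∂ν(b') < ∞, conditioning on the independent variables can be dropped: J(A|B,C)(a,b,c) = J(A|C)(a,c). (This is the soundness of Shuffle's independence coercion CIND: if A ⫫ B | C then a density for Pr(A|C) is also a density for Pr(A|B,C).) -/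
open MeasureTheory ENNReal

/-- Soundness of Shuffle's independence coercion CIND: if `A ⫫ B | C`, then a
density for Pr(A|C) is also a density for Pr(A|B,C). -/
theorem cind_sound {α β γ : Type*} [MeasurableSpace α] [MeasurableSpace β] [MeasurableSpace γ]
    (μ : Measure α) (ν : Measure β) (ρ : Measure γ)
    [SigmaFinite μ] [SigmaFinite ν] [SigmaFinite ρ]
    (p : α → β → γ → ℝ≥0∞)
    (hp : Measurable fun x : α × β × γ => p x.1 x.2.1 x.2.2)
    (c : γ)
    (hC : 0 < ∫⁻ b', ∫⁻ a', p a' b' c ∂μ ∂ν)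
    (hC' : (∫⁻ b', ∫⁻ a', p a' b' c ∂μ ∂ν) < ∞)
    (hindep : ∀ (a : α) (b : β),
      p a b c / ∫⁻ b', ∫⁻ a', p a' b' c ∂μ ∂ν =
        ((∫⁻ b', p a b' c ∂ν) / ∫⁻ b', ∫⁻ a', p a' b' c ∂μ ∂ν) *
          ((∫⁻ a', p a' b c ∂μ) / ∫⁻ b', ∫⁻ a', p a' b' c ∂μ ∂ν))
    (a : α) (b : β)
    (hBC : 0 < ∫⁻ a', p a' b c ∂μ) (hBC' : ∫⁻ a', p a' b c ∂μ < ∞)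
    (hAC' : (∫⁻ b', p a b' c ∂ν) < ∞) :
    p a b c / ∫⁻ a', p a' b c ∂μ =
      (∫⁻ b', p a b' c ∂ν) / ∫⁻ b', ∫⁻ a', p a' b' c ∂μ ∂ν := by
  set x := p a b c with hx
  set A := ∫⁻ b', p a b' c ∂ν with hA
  set B := ∫⁻ a', p a' b c ∂μ with hB
  set C := ∫⁻ b', ∫⁻ a', p a' b' c ∂μ ∂ν with hCdef
  have hC0 : C ≠ 0 := hC.ne'
  have hCt : C ≠ ∞ := hC'.ne
  have hB0 : B ≠ 0 := hBC.ne'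
  have hBt : B ≠ ∞ := hBC'.ne
  have h := hindep a b
  rw [← hx, ← hA, ← hB] at h
  have h3 : x = A * (B / C) := by
    calc x = C * (x / C) := (ENNReal.mul_div_cancel hC0 hCt).symm
    _ = C * (A / C * (B / C)) := by rw [h]
    _ = C * (A / C) * (B / C) := by rw [mul_assoc]
    _ = A * (B / C) := by rw [ENNReal.mul_div_cancel hC0 hCt]
  rw [ENNReal.div_eq_div_iff hC0 hCt hB0 hBt, h3, mul_left_comm,
    ENNReal.mul_div_cancel hC0 hCt, mul_comm]
end

section
/- Let n : ℕ, let α : Fin n → Type be measurable spaces with σ-finite measures μ i, and let d : Fin n → ((Π i, α i) → ℝ≥0∞) be measurable functions such that (i) each d i depends only on the coordinates j ≤ i (i.e., d i x = d i y whenever x j = y j for all j ≤ i), and (ii) each d i is normalized over its own coordinate: for every x, ∫⁻ d i (Function.update x i t) ∂(μ i)(t) = 1. Then for every k : Fin n and every x, marginalizing the product density ∏ i, d i over all coordinates strictly greater than k yields the prefix product: the iterated lower integral (lmarginal) of (fun x => ∏ i, d i x) over the coordinate set {i | k < i} evaluated at x equals ∏ i in {i | i ≤ k}, d i x. (This telescoping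 marginalization is the core computation in the paper's Model Validity theorem for schedulable models.) -/
open MeasureTheory ENNReal Finset

/-- Telescoping marginalization for schedulable models: marginalizing the
product density `∏ i, d i` over all coordinates strictly greater than `k`
yields the prefix product `∏ i ≤ k, d i`. -/
theorem lmarginal_prod_schedulable (n : ℕ) (α : Fin n → Type)
    [∀ i, MeasurableSpace (α i)]
    (μ : ∀ i, Measure (α i)) [∀ i, SigmaFinite (μ i)]
    (d : Fin n → ((∀ i, α i) → ℝ≥0∞))
    (hmeas : ∀ i, Measurable (d i))
    (hdep : ∀ (i : Fin n) (x y : ∀ j, α j), (∀ j, j ≤ i → x j = y j) → d i x = d i y)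
    (hnorm : ∀ (i : Fin n) (x : ∀ j, α j),
      ∫⁻ t, d i (Function.update x i t) ∂(μ i) = 1)
    (k : Fin n) (x : ∀ i, α i) :
    MeasureTheory.lmarginal μ (Finset.univ.filter fun i => k < i)
        (fun x => ∏ i, d i x) x =
      ∏ i ∈ Finset.univ.filter (fun i => i ≤ k), d i x := by
  have hf : Measurable (fun x : ∀ i, α i => ∏ i, d i x) :=
    Finset.measurable_prod _ fun i _ => hmeas i
  cases n with
  | zero => exact k.elim0
  | succ m =>
    induction k using Fin.reverseInduction generalizing x with
    | last =>
      have h1 : (Finset.univ.filter fun i : Fin (m+1) => Fin.last m < i) = ∅ := by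
        ext i; simp [Fin.le_last i, not_lt.mpr (Fin.le_last i)]
      have h2 : (Finset.univ.filter fun i : Fin (m+1) => i ≤ Fin.last m) = univ := by
        ext i; simp [Fin.le_last i]
      rw [h1, h2, lmarginal_empty]
    | cast i ih =>
      have hset : (Finset.univ.filter fun j : Fin (m+1) => i.castSucc < j) =
          insert i.succ (Finset.univ.filter fun j => i.succ < j) := by
        ext j
        simp only [mem_insert, mem_filter, mem_univ, true_and]
        rw [Fin.castSucc_lt_iff_succ_le, le_iff_eq_or_lt, eq_comm]
      have hnot : i.succ ∉ Finset.univ.filter fun j : Fin (m+1) => i.succ < j := by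
        simp
      rw [hset, lmarginal_insert _ hf hnot]
      have hstep : ∀ t : α i.succ,
          (∫⋯∫⁻_(Finset.univ.filter fun j => i.succ < j), (fun x => ∏ i, d i x) ∂μ)
            (Function.update x i.succ t) =
          d i.succ (Function.update x i.succ t) *
            ∏ j ∈ Finset.univ.filter (fun j => j ≤ i.castSucc), d j x := by
        intro t
        rw [ih (Function.update x i.succ t)]
        have hsplit : (Finset.univ.filter fun j : Fin (m+1) => j ≤ i.succ) =
            insert i.succ (Finset.univ.filter fun j => j ≤ i.castSucc) := by
          ext j
          simp only [mem_insert, mem_filter, mem_univ, true_and]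
          rw [le_iff_eq_or_lt, ← Fin.le_castSucc_iff]
        have hnot2 : i.succ ∉ Finset.univ.filter fun j : Fin (m+1) => j ≤ i.castSucc := by
          simp [Fin.le_castSucc_iff]
        rw [hsplit, prod_insert hnot2]
        congr 1
        refine Finset.prod_congr rfl fun j hj => ?_
        simp only [mem_filter, mem_univ, true_and] at hj
        refine hdep j _ _ fun l hl => ?_
        apply Function.update_of_ne
        exact Fin.ne_of_lt (Fin.le_castSucc_iff.mp (hl.trans hj))
      simp_rw [hstep]
      rw [lintegral_mul_const _
          (show Measurable fun t => d i.succ (Function.update x i.succ t) from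
            (hmeas i.succ).comp (measurable_update x)), hnorm, one_mul]
end

section
/- Let n : ℕ, let α : Fin n → Type be measurable spaces with σ-finite measures μ i, and let d : Fin n → ((Π i, α i) → ℝ≥0∞) be measurable functions such that (i) each d i depends only on the coordinates j ≤ i (i.e., d i x = d i y whenever x j = y j for all j ≤ i), and (ii) for every i and every x, ∫⁻ d i (Function.update x i t) ∂(μ i)(t) = 1. Then for every k : Fin n and every x at which ∏ i in {i | i < k}, d i x is positive and finite, each factor equals the corresponding conditional density of the joint: d k x = (lmarginal of (∏ i, d i) over {i | k < i}) x / (lmarginal of (∏ i, d i) over {i | k ≤ i}) x. (This is the content of the paper's Theorem 1, Model Validity: in a valid model, each density definition equals the conditional density J(A_k | x_{<k}) determined by the joint density.) -/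
open MeasureTheory ENNReal Finset

theorem tail_marginal (n : ℕ) (α : Fin n → Type)
    [∀ i, MeasurableSpace (α i)]
    (μ : ∀ i, Measure (α i)) [∀ i, SigmaFinite (μ i)]
    (d : Fin n → ((∀ i, α i) → ℝ≥0∞))
    (hmeas : ∀ i, Measurable (d i))
    (hdep : ∀ (i : Fin n) (x y : ∀ j, α j), (∀ j, j ≤ i → x j = y j) → d i x = d i y)
    (hnorm : ∀ (i : Fin n) (x : ∀ j, α j),
      ∫⁻ t, d i (Function.update x i t) ∂(μ i) = 1) :
    ∀ (j m : ℕ), m + j = n → ∀ x : ∀ i, α i,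
      MeasureTheory.lmarginal μ (Finset.univ.filter fun i : Fin n => m ≤ i.val)
        (fun x => ∏ i, d i x) x
      = ∏ i ∈ Finset.univ.filter (fun i : Fin n => i.val < m), d i x := by
  have hF : Measurable (fun x : ∀ i, α i => ∏ i, d i x) :=
    Finset.measurable_prod _ fun i _ => hmeas i
  intro j
  induction j with
  | zero =>
    intro m hm x
    have h1 : (Finset.univ.filter fun i : Fin n => m ≤ i.val) = ∅ := by
      ext i; simp; omega
    have h2 : (Finset.univ.filter fun i : Fin n => i.val < m) = Finset.univ := by
      ext i; simp; omega
    rw [h1, h2, MeasureTheory.lmarginal_empty]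
  | succ j ih =>
    intro m hm x
    have hmn : m < n := by omega
    have hset : (Finset.univ.filter fun i : Fin n => m ≤ i.val)
        = insert ⟨m, hmn⟩ (Finset.univ.filter fun i : Fin n => m + 1 ≤ i.val) := by
      ext i
      simp only [Finset.mem_filter, Finset.mem_insert, Finset.mem_univ, true_and,
        Fin.ext_iff]
      omega
    have hnotmem : (⟨m, hmn⟩ : Fin n) ∉
        (Finset.univ.filter fun i : Fin n => m + 1 ≤ i.val) := by simp
    rw [hset, MeasureTheory.lmarginal_insert _ hF hnotmem]
    have hstep : ∀ t : α ⟨m, hmn⟩,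
        MeasureTheory.lmarginal μ (Finset.univ.filter fun i : Fin n => m + 1 ≤ i.val)
          (fun x => ∏ i, d i x) (Function.update x ⟨m, hmn⟩ t)
        = d ⟨m, hmn⟩ (Function.update x ⟨m, hmn⟩ t)
          * ∏ i ∈ Finset.univ.filter (fun i : Fin n => i.val < m), d i x := by
      intro t
      rw [ih (m + 1) (by omega) (Function.update x ⟨m, hmn⟩ t)]
      have hset2 : (Finset.univ.filter fun i : Fin n => i.val < m + 1)
          = insert ⟨m, hmn⟩ (Finset.univ.filter fun i : Fin n => i.val < m) := by
        ext i
        simp only [Finset.mem_filter, Finset.mem_insert, Finset.mem_univ, true_and,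
          Fin.ext_iff]
        omega
      have hnotmem2 : (⟨m, hmn⟩ : Fin n) ∉
          (Finset.univ.filter fun i : Fin n => i.val < m) := by simp
      rw [hset2, Finset.prod_insert hnotmem2]
      congr 1
      refine Finset.prod_congr rfl fun i hi => ?_
      simp only [Finset.mem_filter] at hi
      refine hdep i _ _ fun l hl => ?_
      refine Function.update_of_ne ?_ _ _
      intro h
      have : l.val = m := congrArg Fin.val h
      have : l.val ≤ i.val := hl
      omega
    simp only [hstep]
    have hm' : Measurable fun t : α ⟨m, hmn⟩ => d ⟨m, hmn⟩ (Function.update x ⟨m, hmn⟩ t) :=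
      (hmeas _).comp (measurable_update x)
    rw [MeasureTheory.lintegral_mul_const'' _ hm'.aemeasurable, hnorm, one_mul]

/-- Model Validity (Theorem 1 of the paper): in a valid (schedulable,
normalized) model, each density definition `d k` equals the conditional
density of the joint density determined by the model. -/
theorem model_validity (n : ℕ) (α : Fin n → Type)
    [∀ i, MeasurableSpace (α i)]
    (μ : ∀ i, Measure (α i)) [∀ i, SigmaFinite (μ i)]
    (d : Fin n → ((∀ i, α i) → ℝ≥0∞))
    (hmeas : ∀ i, Measurable (d i))
    (hdep : ∀ (i : Fin n) (x y : ∀ j, α j), (∀ j, j ≤ i → x j = y j) → d i x = d i y)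
    (hnorm : ∀ (i : Fin n) (x : ∀ j, α j),
      ∫⁻ t, d i (Function.update x i t) ∂(μ i) = 1)
    (k : Fin n) (x : ∀ i, α i)
    (hpos : 0 < ∏ i ∈ Finset.univ.filter (fun i => i < k), d i x)
    (hfin : (∏ i ∈ Finset.univ.filter (fun i => i < k), d i x) < ∞) :
    d k x =
      MeasureTheory.lmarginal μ (Finset.univ.filter fun i => k < i)
          (fun x => ∏ i, d i x) x /
        MeasureTheory.lmarginal μ (Finset.univ.filter fun i => k ≤ i)
          (fun x => ∏ i, d i x) x := by
  have h1 : (Finset.univ.filter fun i : Fin n => k < i)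
      = Finset.univ.filter fun i : Fin n => (k.val + 1 : ℕ) ≤ i.val := by
    ext i; simp only [Finset.mem_filter, Finset.mem_univ, true_and, Fin.lt_def]; omega
  have h2 : (Finset.univ.filter fun i : Fin n => k ≤ i)
      = Finset.univ.filter fun i : Fin n => (k.val : ℕ) ≤ i.val := by
    ext i; simp only [Finset.mem_filter, Finset.mem_univ, true_and, Fin.le_def]
  have h3 : (Finset.univ.filter fun i : Fin n => i < k)
      = Finset.univ.filter fun i : Fin n => i.val < k.val := by
    ext i; simp only [Finset.mem_filter, Finset.mem_univ, true_and, Fin.lt_def]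
  rw [h1, h2,
    tail_marginal n α μ d hmeas hdep hnorm (n - (k.val + 1)) (k.val + 1) (by omega) x,
    tail_marginal n α μ d hmeas hdep hnorm (n - k.val) k.val (by omega) x]
  have hset : (Finset.univ.filter fun i : Fin n => i.val < k.val + 1)
      = insert k (Finset.univ.filter fun i : Fin n => i.val < k.val) := by
    ext i
    simp only [Finset.mem_filter, Finset.mem_insert, Finset.mem_univ, true_and, Fin.ext_iff]
    omega
  have hnotmem : k ∉ (Finset.univ.filter fun i : Fin n => i.val < k.val) := by simp
  rw [hset, Finset.prod_insert hnotmem]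
  rw [h3] at hpos hfin
  rw [mul_comm, mul_div_assoc]
  exact (ENNReal.mul_div_cancel (ne_of_gt hpos) (ne_of_lt hfin)).symm
end

section
/- Let f : ℝ → ℝ≥0∞ be measurable with ∫⁻ f(x) dx = 1 (with respect to Lebesgue measure). Define the cumulative distribution function G : ℝ → ℝ by G(r) = (∫⁻_{Iic r} f dvolume).toReal, and the generalized inverse (inverse-transform sampler) ψ : ℝ → ℝ by ψ(u) = sInf {r : ℝ | u < G r}. Then for every measurable h : ℝ → ℝ≥0∞, ∫⁻_{u ∈ Ioo 0 1} h(ψ u) dvolume(u) = ∫⁻ h(x) * f(x) dvolume(x). (This is the correctness of inverse transform sampling in the continuous case, used in the paper's SLIFT soundness proof: the expectation of any nonnegative function under the sampler equals its expectation under the density.) -/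
open MeasureTheory ENNReal Set

/-- Correctness of inverse transform sampling in the continuous case (used in
the SLIFT soundness proof): the expectation of any nonnegative function under
the inverse-transform sampler equals its expectation under the density. -/
theorem inverse_transform_sampling_continuous
    (f : ℝ → ℝ≥0∞) (hf : Measurable f) (hf1 : ∫⁻ x, f x = 1)
    (G : ℝ → ℝ) (hG : ∀ r, G r = (∫⁻ x in Iic r, f x).toReal)
    (ψ : ℝ → ℝ) (hψ : ∀ u, ψ u = sInf {r : ℝ | u < G r})
    (h : ℝ → ℝ≥0∞) (hh : Measurable h) :
    ∫⁻ u in Ioo (0 : ℝ) 1, h (ψ u) = ∫⁻ x, h x * f x := by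
  set μ : Measure ℝ := volume.withDensity f with hμdef
  have hμIic : ∀ r, μ (Iic r) = ∫⁻ x in Iic r, f x := fun r =>
    withDensity_apply f measurableSet_Iic
  have hμuniv : μ univ = 1 := by
    rw [hμdef, withDensity_apply f MeasurableSet.univ, Measure.restrict_univ, hf1]
  have hfin : ∀ r, μ (Iic r) ≤ 1 := fun r => hμuniv ▸ measure_mono (subset_univ _)
  have hfin' : ∀ r, μ (Iic r) ≠ ∞ := fun r => ((hfin r).trans_lt one_lt_top).ne
  have hGr : ∀ r, G r = (μ (Iic r)).toReal := fun r => by rw [hG r, hμIic r]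
  have hG0 : ∀ r, 0 ≤ G r := fun r => by rw [hGr]; exact ENNReal.toReal_nonneg
  have hG1 : ∀ r, G r ≤ 1 := fun r => by
    rw [hGr]
    simpa using ENNReal.toReal_mono one_ne_top (hfin r)
  have hGmono : Monotone G := fun a b hab => by
    rw [hGr, hGr]
    exact ENNReal.toReal_mono (hfin' b) (measure_mono (Iic_subset_Iic.2 hab))
  have hofReal : ∀ r, ENNReal.ofReal (G r) = μ (Iic r) := fun r => by
    rw [hGr]; exact ofReal_toReal (hfin' r)
  -- nonemptiness of the sets {r | u < G r} for u < 1
  have hSne : ∀ u : ℝ, u < 1 → {r : ℝ | u < G r}.Nonempty := by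
    intro u hu
    by_contra hemp
    push_neg at hemp
    simp only [not_nonempty_iff_eq_empty, eq_empty_iff_forall_notMem, mem_setOf_eq,
      not_lt] at hemp
    have htend := tendsto_measure_Iic_atTop (α := ℝ) μ
    rw [hμuniv] at htend
    have hle : (1 : ℝ≥0∞) ≤ ENNReal.ofReal u := by
      refine le_of_tendsto htend (Filter.Eventually.of_forall fun r => ?_)
      rw [← hofReal r]
      exact ENNReal.ofReal_le_ofReal (hemp r)
    exact absurd (hle.trans_lt (ENNReal.ofReal_lt_one.2 hu)) (lt_irrefl _)
  -- boundedness below of the sets {r | u < G r} for 0 < u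
  have hSbdd : ∀ u : ℝ, 0 < u → BddBelow {r : ℝ | u < G r} := by
    intro u hu
    have hex : ∃ r₀ : ℝ, G r₀ < u := by
      by_contra hno
      push_neg at hno
      have htend : Filter.Tendsto (fun n : ℕ => μ (Iic (-(n : ℝ)))) Filter.atTop
          (nhds (μ (⋂ n : ℕ, Iic (-(n : ℝ))))) := by
        refine tendsto_measure_iInter_atTop
          (fun n => measurableSet_Iic.nullMeasurableSet)
          (fun a b hab => Iic_subset_Iic.2 (by simpa using hab)) ⟨0, by simpa using hfin' 0⟩
      have hinter : (⋂ n : ℕ, Iic (-(n : ℝ))) = ∅ := by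
        ext x
        simp only [mem_iInter, mem_Iic, mem_empty_iff_false, iff_false, not_forall, not_le]
        obtain ⟨n, hn⟩ := exists_nat_gt (-x)
        exact ⟨n, by linarith⟩
      rw [hinter, measure_empty] at htend
      have hle : ENNReal.ofReal u ≤ 0 := by
        refine ge_of_tendsto htend (Filter.Eventually.of_forall fun n => ?_)
        rw [← hofReal]
        exact ENNReal.ofReal_le_ofReal (hno _)
      have : (0:ℝ≥0∞) < ENNReal.ofReal u := ENNReal.ofReal_pos.2 hu
      exact absurd (this.trans_le hle) (lt_irrefl _)
    obtain ⟨r₀, hr₀⟩ := hex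
    exact ⟨r₀, fun r hr => le_of_not_gt fun hlt =>
      absurd ((hGmono hlt.le).trans_lt hr₀) (not_lt.2 hr.le)⟩
  -- ψ is monotone on (0,1)
  have hmono : MonotoneOn ψ (Ioo (0:ℝ) 1) := by
    intro u hu v hv huv
    rw [hψ u, hψ v]
    exact csInf_le_csInf (hSbdd u hu.1) (hSne v hv.2)
      (fun r hr => lt_of_le_of_lt huv hr)
  have hψmeas : AEMeasurable ψ (volume.restrict (Ioo (0:ℝ) 1)) :=
    aemeasurable_restrict_of_monotoneOn measurableSet_Ioo hmono
  haveI hrestrprob : IsProbabilityMeasure (volume.restrict (Ioo (0:ℝ) 1)) := by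
    constructor
    rw [Measure.restrict_apply_univ, Real.volume_Ioo]
    norm_num
  haveI : IsProbabilityMeasure (Measure.map ψ (volume.restrict (Ioo (0:ℝ) 1))) :=
    Measure.isProbabilityMeasure_map hψmeas
  -- the pushforward of the uniform measure on (0,1) under ψ is μ
  have hmap : Measure.map ψ (volume.restrict (Ioo (0:ℝ) 1)) = μ := by
    refine Measure.ext_of_Iic _ _ fun r => ?_
    rw [Measure.map_apply_of_aemeasurable hψmeas measurableSet_Iic,
      Measure.restrict_apply' measurableSet_Ioo]
    have hsub1 : Ioo (0:ℝ) (G r) ⊆ ψ ⁻¹' Iic r ∩ Ioo 0 1 := by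
      intro u hu
      refine ⟨?_, hu.1, hu.2.trans_le (hG1 r)⟩
      simp only [mem_preimage, mem_Iic, hψ u]
      exact csInf_le (hSbdd u hu.1) hu.2
    have hsub2 : ψ ⁻¹' Iic r ∩ Ioo 0 1 ⊆ Ioc (0:ℝ) (G r) := by
      intro u hu
      refine ⟨hu.2.1, ?_⟩
      -- u ≤ G s for all s > r
      have hle : ∀ s, r < s → u ≤ G s := by
        intro s hs
        have h1 : sInf {x : ℝ | u < G x} < s := by
          have := hu.1
          simp only [mem_preimage, mem_Iic, hψ u] at this
          exact this.trans_lt hs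
        obtain ⟨r', hr', hr's⟩ := exists_lt_of_csInf_lt (hSne u hu.2.2) h1
        exact (le_of_lt hr').trans (hGmono hr's.le)
      -- right-continuity of the cdf via continuity from above of μ
      have htend := tendsto_measure_biInter_gt (μ := μ) (s := fun s => Iic s) (a := r)
        (fun s _ => measurableSet_Iic.nullMeasurableSet)
        (fun i j _ hij => Iic_subset_Iic.2 hij) ⟨r + 1, by linarith, hfin' _⟩
      have hinter : (⋂ s > r, Iic s) = Iic r := by
        ext x
        simp only [mem_iInter, mem_Iic]
        exact ⟨fun hx => le_of_forall_gt_imp_ge_of_dense fun s hs => hx s hs,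
          fun hx s hs => hx.trans hs.le⟩
      rw [hinter] at htend
      have hge : ENNReal.ofReal u ≤ μ (Iic r) := by
        refine ge_of_tendsto htend ?_
        filter_upwards [self_mem_nhdsWithin] with s hs
        show ENNReal.ofReal u ≤ μ (Iic s); rw [← hofReal s]
        exact ENNReal.ofReal_le_ofReal (hle s hs)
      rw [← hofReal r] at hge
      exact (ENNReal.ofReal_le_ofReal_iff (hG0 r)).1 hge
    refine le_antisymm ?_ ?_
    · calc volume (ψ ⁻¹' Iic r ∩ Ioo 0 1) ≤ volume (Ioc (0:ℝ) (G r)) :=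
            measure_mono hsub2
        _ = ENNReal.ofReal (G r) := by rw [Real.volume_Ioc]; ring_nf
        _ = μ (Iic r) := hofReal r
    · calc μ (Iic r) = ENNReal.ofReal (G r) := (hofReal r).symm
        _ = volume (Ioo (0:ℝ) (G r)) := by rw [Real.volume_Ioo]; ring_nf
        _ ≤ volume (ψ ⁻¹' Iic r ∩ Ioo 0 1) := measure_mono hsub1
  calc ∫⁻ u in Ioo (0:ℝ) 1, h (ψ u)
      = ∫⁻ x, h x ∂(Measure.map ψ (volume.restrict (Ioo (0:ℝ) 1))) :=
        (lintegral_map' hh.aemeasurable hψmeas).symm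
    _ = ∫⁻ x, h x ∂μ := by rw [hmap]
    _ = ∫⁻ x, h x * f x := by
        rw [hμdef, lintegral_withDensity_eq_lintegral_mul volume hf hh]
        simp [mul_comm]
end

section
/- Let p : ℕ → ℝ≥0∞ satisfy ∑' n, p n = 1. Define the cumulative sums F : ℕ → ℝ by F n = (∑ j in Finset.range (n+1), p j).toReal, and for u : ℝ define the sampled index r(u) = sInf {n : ℕ | u < F n}. Then for every k : ℕ, the Lebesgue measure of the set {u ∈ Ico (0:ℝ) 1 | r u = k} equals p k. (This is the correctness of inverse transform sampling in the discrete case, used in the paper's SLIFT soundness proof: the probability that the sampler outputs k equals the probability mass p k.) -/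
open MeasureTheory ENNReal Set

/-- Correctness of inverse transform sampling in the discrete case (used in
the SLIFT soundness proof): the Lebesgue measure of the set of seeds on which
the sampler outputs `k` equals the probability mass `p k`. -/
theorem inverse_transform_sampling_discrete
    (p : ℕ → ℝ≥0∞) (hp : ∑' n, p n = 1)
    (F : ℕ → ℝ) (hF : ∀ n, F n = (∑ j ∈ Finset.range (n + 1), p j).toReal)
    (r : ℝ → ℕ) (hr : ∀ u, r u = sInf {n : ℕ | u < F n})
    (k : ℕ) :
    volume {u : ℝ | u ∈ Ico (0 : ℝ) 1 ∧ r u = k} = p k := by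
  have hpne : ∀ n, p n ≠ ⊤ := fun n =>
    ne_top_of_le_ne_top one_ne_top (hp ▸ ENNReal.le_tsum n)
  have hSle : ∀ n, (∑ j ∈ Finset.range (n + 1), p j) ≤ 1 := fun n =>
    hp ▸ ENNReal.sum_le_tsum _
  have hSne : ∀ n, (∑ j ∈ Finset.range (n + 1), p j) ≠ ⊤ := fun n =>
    ne_top_of_le_ne_top one_ne_top (hSle n)
  have hFmono : Monotone F := by
    intro a b hab
    rw [hF a, hF b]
    exact ENNReal.toReal_mono (hSne b)
      (Finset.sum_le_sum_of_subset (Finset.range_subset_range.2 (by omega)))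
  have hF0 : ∀ n, 0 ≤ F n := fun n => by rw [hF n]; exact ENNReal.toReal_nonneg
  have hF1 : ∀ n, F n ≤ 1 := fun n => by
    rw [hF n]
    calc (∑ j ∈ Finset.range (n + 1), p j).toReal ≤ (1 : ℝ≥0∞).toReal :=
          ENNReal.toReal_mono one_ne_top (hSle n)
      _ = 1 := by simp
  have hexists : ∀ u : ℝ, u < 1 → ∃ n, u < F n := by
    intro u hu
    by_contra h
    push_neg at h
    have hle : (1 : ℝ≥0∞) ≤ ENNReal.ofReal u := by
      rw [← hp, ENNReal.tsum_eq_iSup_sum]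
      refine iSup_le fun s => ?_
      obtain ⟨n, hn⟩ := s.exists_nat_subset_range
      calc ∑ j ∈ s, p j ≤ ∑ j ∈ Finset.range (n + 1), p j :=
            Finset.sum_le_sum_of_subset (hn.trans (Finset.range_subset_range.2 (by omega)))
        _ = ENNReal.ofReal (F n) := by rw [hF n, ENNReal.ofReal_toReal (hSne n)]
        _ ≤ ENNReal.ofReal u := ENNReal.ofReal_le_ofReal (h n)
    exact absurd (lt_of_le_of_lt hle (ENNReal.ofReal_lt_one.2 hu)) (lt_irrefl _)
  cases k with
  | zero =>
    have hset : {u : ℝ | u ∈ Ico (0 : ℝ) 1 ∧ r u = 0} = Ico 0 (F 0) := by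
      ext u
      simp only [Set.mem_Ico, Set.mem_setOf_eq, hr]
      constructor
      · rintro ⟨⟨hu0, hu1⟩, hinf⟩
        refine ⟨hu0, ?_⟩
        rcases Nat.sInf_eq_zero.1 hinf with h0 | hemp
        · exact h0
        · obtain ⟨n, hn⟩ := hexists u hu1
          exact absurd (Set.eq_empty_iff_forall_notMem.1 hemp n) (by simpa using hn)
      · rintro ⟨hu0, huF⟩
        exact ⟨⟨hu0, lt_of_lt_of_le huF (hF1 0)⟩, Nat.sInf_eq_zero.2 (Or.inl huF)⟩
    rw [hset, Real.volume_Ico]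
    rw [hF 0, Finset.sum_range_one, sub_zero, ENNReal.ofReal_toReal (hpne 0)]
  | succ k =>
    have hset : {u : ℝ | u ∈ Ico (0 : ℝ) 1 ∧ r u = k + 1} = Ico (F k) (F (k + 1)) := by
      ext u
      simp only [Set.mem_Ico, Set.mem_setOf_eq, hr]
      constructor
      · rintro ⟨⟨hu0, hu1⟩, hinf⟩
        have hne : {n : ℕ | u < F n}.Nonempty := hexists u hu1
        have hmem : u < F (k + 1) := by
          have := Nat.sInf_mem hne
          rwa [hinf] at this
        have hnot : ¬ u < F k := by
          intro hk
          have := Nat.sInf_le (show k ∈ {n : ℕ | u < F n} from hk)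
          omega
        exact ⟨not_lt.1 hnot, hmem⟩
      · rintro ⟨hu0, huF⟩
        have hu0' : (0 : ℝ) ≤ u := le_trans (hF0 k) hu0
        have hu1 : u < 1 := lt_of_lt_of_le huF (hF1 (k + 1))
        refine ⟨⟨hu0', hu1⟩, ?_⟩
        refine le_antisymm (Nat.sInf_le huF) ?_
        by_contra h
        push_neg at h
        have hmem := Nat.sInf_mem (hexists u hu1)
        have : F (sInf {n : ℕ | u < F n}) ≤ F k := hFmono (by omega)
        exact absurd (lt_of_lt_of_le hmem (this.trans hu0)) (lt_irrefl _)
    rw [hset, Real.volume_Ico]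
    have hFsucc : F (k + 1) = F k + (p (k + 1)).toReal := by
      rw [hF (k + 1), hF k, Finset.sum_range_succ,
        ENNReal.toReal_add (hSne k) (hpne (k + 1))]
    rw [hFsucc, add_sub_cancel_left, ENNReal.ofReal_toReal (hpne (k + 1))]
end

section
/- Fix c ∈ γ with 0 < p_C(c) < ∞, and suppose 0 < p_BC(b,c) < ∞ for ν-almost every b. Let M_B = ν.withDensity (fun b => J(B|C)(b,c)) be the measure on β with density J(B|C)(·,c), and for each b let M_A(b) = μ.withDensity (fun a => J(A|B,C)(a,b,c)); assume b ↦ M_A(b) defines a measurable (Markov) kernel from β to α. Then the composition-product of M_B with this kernel equals the measure on β × α with density J(A,B|C): M_B ⊗ₘ (fun b => M_A(b)) = (ν.prod μ).withDensity (fun (b,a) => J(A,B|C)(a,b,c)). (This is the soundness of Shuffle's SBIND rule: sequentially composing a sampler for Pr(B|C) with a sampler for Pr(A|B,C) yields a sampler for Pr(A,B|C).) -/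
open MeasureTheory ProbabilityTheory ENNReal
open scoped ProbabilityTheory

/-- Soundness of Shuffle's SBIND rule: sequentially composing a sampler for
Pr(B|C) with a sampler for Pr(A|B,C) yields a sampler for Pr(A,B|C). -/
theorem sbind_sound {α β γ : Type*} [MeasurableSpace α] [MeasurableSpace β] [MeasurableSpace γ]
    (μ : Measure α) (ν : Measure β) (ρ : Measure γ)
    [SigmaFinite μ] [SigmaFinite ν] [SigmaFinite ρ]
    (p : α → β → γ → ℝ≥0∞)
    (hp : Measurable fun x : α × β × γ => p x.1 x.2.1 x.2.2)
    (c : γ)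
    (hC : 0 < ∫⁻ b', ∫⁻ a', p a' b' c ∂μ ∂ν)
    (hC' : (∫⁻ b', ∫⁻ a', p a' b' c ∂μ ∂ν) < ∞)
    (hBC : ∀ᵐ b ∂ν, 0 < (∫⁻ a', p a' b c ∂μ) ∧ (∫⁻ a', p a' b c ∂μ) < ∞)
    (κ : Kernel β α) [IsMarkovKernel κ]
    (hκ : ∀ b : β, κ b = μ.withDensity fun a => p a b c / ∫⁻ a', p a' b c ∂μ) :
    (ν.withDensity fun b =>
        (∫⁻ a', p a' b c ∂μ) / ∫⁻ b', ∫⁻ a', p a' b' c ∂μ ∂ν) ⊗ₘ κ =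
      (ν.prod μ).withDensity fun x =>
        p x.2 x.1 c / ∫⁻ b', ∫⁻ a', p a' b' c ∂μ ∂ν := by
  set pC : ℝ≥0∞ := ∫⁻ b', ∫⁻ a', p a' b' c ∂μ ∂ν with hpC
  have hpm : Measurable fun x : α × β => p x.1 x.2 c :=
    hp.comp (measurable_fst.prodMk (measurable_snd.prodMk measurable_const))
  have hBCm : Measurable fun b => ∫⁻ a, p a b c ∂μ :=
    Measurable.lintegral_prod_left hpm
  have hgm : Measurable fun x : β × α => p x.2 x.1 c / pC :=
    ((hpm.comp measurable_swap).div measurable_const)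
  ext s hs
  rw [Measure.compProd_apply hs, withDensity_apply _ hs,
    lintegral_withDensity_eq_lintegral_mul _ (show Measurable fun b => (∫⁻ a', p a' b c ∂μ) / pC from hBCm.div measurable_const)
      (Kernel.measurable_kernel_prodMk_left hs)]
  have hrhs : ∫⁻ x in s, p x.2 x.1 c / pC ∂ν.prod μ
      = ∫⁻ b, ∫⁻ a in Prod.mk b ⁻¹' s, p a b c / pC ∂μ ∂ν := by
    rw [← lintegral_indicator hs, lintegral_prod _ (hgm.indicator hs).aemeasurable]
    refine lintegral_congr fun b => ?_
    rw [← lintegral_indicator (measurable_prodMk_left hs)]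
    congr 1
  rw [hrhs]
  refine lintegral_congr_ae (hBC.mono fun b hb => ?_)
  have hκb : κ b (Prod.mk b ⁻¹' s)
      = ∫⁻ a in Prod.mk b ⁻¹' s, p a b c / ∫⁻ a', p a' b c ∂μ ∂μ := by
    rw [hκ b, withDensity_apply _ (measurable_prodMk_left hs)]
  simp only [Pi.mul_apply, hκb]
  set I := ∫⁻ a', p a' b c ∂μ with hI
  have hpb : Measurable fun a => p a b c :=
    hpm.comp (measurable_id.prodMk measurable_const)
  simp only [div_eq_mul_inv]
  rw [lintegral_mul_const _ hpb, lintegral_mul_const _ hpb]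
  calc I * pC⁻¹ * ((∫⁻ a in Prod.mk b ⁻¹' s, p a b c ∂μ) * I⁻¹)
      = I * I⁻¹ * ((∫⁻ a in Prod.mk b ⁻¹' s, p a b c ∂μ) * pC⁻¹) := by ring
    _ = (∫⁻ a in Prod.mk b ⁻¹' s, p a b c ∂μ) * pC⁻¹ := by
        rw [ENNReal.mul_inv_cancel hb.1.ne' hb.2.ne, one_mul]
end

section
/- Let α be a measurable space, β a standard Borel space, and ρ a probability measure on α × β, with disintegration ρ = ρ.fst ⊗ₘ ρ.condKernel where ρ.condKernel is the conditional kernel from α to β. Let κ be a Markov kernel from α × β to β such that for ρ.fst-almost every a, the conditional measure is invariant: (ρ.condKernel a).bind (fun b => κ (a,b)) = ρ.condKernel a. Define the kernel K from α × β to α × β by K (a,b) = (κ (a,b)).map (fun b' => (a, b')), i.e., K resamples the second coordinate using κ and leaves the first coordinate unchanged. Then ρ.bind K = ρ. (This is the sub-lemma in the paper's KCOMBINE soundness proof: a kernel that is invariant for the conditional distribution Pr(B | A) is invariant for the joint distribution Pr(A, B) when it does not modify A.) -/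
open MeasureTheory ProbabilityTheory
open scoped ProbabilityTheory

/-- Sub-lemma of the KCOMBINE soundness proof: a kernel that is invariant for
the conditional distribution Pr(B | A) is invariant for the joint
distribution Pr(A, B) when it does not modify A. -/
theorem kcombine_conditional_invariant {α β : Type*}
    [MeasurableSpace α] [MeasurableSpace β] [StandardBorelSpace β] [Nonempty β]
    (ρ : Measure (α × β)) [IsProbabilityMeasure ρ]
    (hdis : ρ = ρ.fst ⊗ₘ ρ.condKernel)
    (κ : Kernel (α × β) β) [IsMarkovKernel κ]
    (hinv : ∀ᵐ a ∂ρ.fst,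
      (ρ.condKernel a).bind (fun b => κ (a, b)) = ρ.condKernel a) :
    ρ.bind (fun x : α × β => (κ x).map (fun b' => (x.1, b'))) = ρ := by
  have hK : Measurable (fun x : α × β => (κ x).map (fun b' => (x.1, b'))) := by
    refine Measure.measurable_of_measurable_coe _ fun s hs => ?_
    have h1 : ∀ x : α × β, (κ x).map (fun b' => (x.1, b')) s
        = κ x (Prod.mk x ⁻¹' {p : (α × β) × β | (p.1.1, p.2) ∈ s}) := by
      intro x
      rw [Measure.map_apply measurable_prodMk_left hs]
      rfl
    simp_rw [h1]
    exact Kernel.measurable_kernel_prodMk_left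
      ((measurable_fst.fst.prodMk measurable_snd) hs)
  ext s hs
  rw [Measure.bind_apply hs hK.aemeasurable]
  have hmap : ∀ x : α × β, (κ x).map (fun b' => (x.1, b')) s
      = κ x (Prod.mk x.1 ⁻¹' s) := fun x =>
    Measure.map_apply measurable_prodMk_left hs
  simp_rw [hmap]
  have hg : Measurable (fun x : α × β => κ x (Prod.mk x.1 ⁻¹' s)) := by
    have h1 : ∀ x : α × β, κ x (Prod.mk x.1 ⁻¹' s)
        = κ x (Prod.mk x ⁻¹' {p : (α × β) × β | (p.1.1, p.2) ∈ s}) := fun x => rfl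
    simp_rw [h1]
    exact Kernel.measurable_kernel_prodMk_left
      ((measurable_fst.fst.prodMk measurable_snd) hs)
  rw [hdis, MeasureTheory.Measure.lintegral_compProd hg]
  have : ∀ᵐ a ∂ρ.fst, ∫⁻ b, κ (a, b) (Prod.mk a ⁻¹' s) ∂(ρ.condKernel a)
      = ρ.condKernel a (Prod.mk a ⁻¹' s) := by
    filter_upwards [hinv] with a ha
    rw [← Measure.bind_apply (m := ρ.condKernel a) (f := fun b => κ (a, b))
      (measurable_prodMk_left hs) (κ.measurable.comp measurable_prodMk_left).aemeasurable, ha]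
  rw [lintegral_congr_ae this, Measure.compProd_apply hs]
end

section
/- Fix b ∈ β and c ∈ γ, and suppose 0 < p_B(b) < ∞, 0 < p_BC(b,c) < ∞, and 0 < p_AB(a,b) < ∞ for μ-almost every a. Then for every measurable f : α → ℝ≥0∞, the self-normalized importance-weighted expectation equals the conditional expectation: (∫⁻ f(a) * J(C|A,B)(a,b,c) * J(A|B)(a,b) ∂μ(a)) / (∫⁻ J(C|A,B)(a,b,c) * J(A|B)(a,b) ∂μ(a)) = ∫⁻ f(a) * J(A|B,C)(a,b,c) ∂μ(a). (This is the soundness of Shuffle's EFACT rule for likelihood weighting: reweighting samples from Pr(A|B) by the density of Pr(C|A,B) and normalizing yields expectations under the posterior Pr(A|B,C).) -/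
open MeasureTheory ENNReal

/-- Soundness of Shuffle's EFACT rule for likelihood weighting: reweighting
samples from Pr(A|B) by the density of Pr(C|A,B) and self-normalizing yields
expectations under the posterior Pr(A|B,C). -/
theorem efact_sound {α β γ : Type*} [MeasurableSpace α] [MeasurableSpace β] [MeasurableSpace γ]
    (μ : Measure α) (ν : Measure β) (ρ : Measure γ)
    [SigmaFinite μ] [SigmaFinite ν] [SigmaFinite ρ]
    (p : α → β → γ → ℝ≥0∞)
    (hp : Measurable fun x : α × β × γ => p x.1 x.2.1 x.2.2)
    (b : β) (c : γ)
    (hB : 0 < ∫⁻ a', ∫⁻ c', p a' b c' ∂ρ ∂μ)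
    (hB' : (∫⁻ a', ∫⁻ c', p a' b c' ∂ρ ∂μ) < ∞)
    (hBC : 0 < ∫⁻ a', p a' b c ∂μ) (hBC' : (∫⁻ a', p a' b c ∂μ) < ∞)
    (hAB : ∀ᵐ a ∂μ, 0 < (∫⁻ c', p a b c' ∂ρ) ∧ (∫⁻ c', p a b c' ∂ρ) < ∞)
    (f : α → ℝ≥0∞) (hf : Measurable f) :
    (∫⁻ a, f a * (p a b c / ∫⁻ c', p a b c' ∂ρ) *
        ((∫⁻ c', p a b c' ∂ρ) / ∫⁻ a', ∫⁻ c', p a' b c' ∂ρ ∂μ) ∂μ) /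
      (∫⁻ a, (p a b c / ∫⁻ c', p a b c' ∂ρ) *
        ((∫⁻ c', p a b c' ∂ρ) / ∫⁻ a', ∫⁻ c', p a' b c' ∂ρ ∂μ) ∂μ) =
    ∫⁻ a, f a * (p a b c / ∫⁻ a', p a' b c ∂μ) ∂μ := by
  set pB := ∫⁻ a', ∫⁻ c', p a' b c' ∂ρ ∂μ with hpB
  set pBC := ∫⁻ a', p a' b c ∂μ with hpBC
  have hpabc : Measurable fun a => p a b c := by
    have : Measurable fun a : α => ((a, b, c) : α × β × γ) := by measurability
    exact hp.comp this
  have key : ∀ g : α → ℝ≥0∞, Measurable g →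
      (∫⁻ a, g a * (p a b c / ∫⁻ c', p a b c' ∂ρ) *
        ((∫⁻ c', p a b c' ∂ρ) / pB) ∂μ) = (∫⁻ a, g a * p a b c ∂μ) * pB⁻¹ := by
    intro g hg
    have h1 : (∫⁻ a, g a * (p a b c / ∫⁻ c', p a b c' ∂ρ) *
        ((∫⁻ c', p a b c' ∂ρ) / pB) ∂μ) = ∫⁻ a, g a * p a b c * pB⁻¹ ∂μ := by
      refine lintegral_congr_ae ?_
      filter_upwards [hAB] with a ⟨h0, hfin⟩
      rw [div_eq_mul_inv, div_eq_mul_inv]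
      calc g a * (p a b c * (∫⁻ c', p a b c' ∂ρ)⁻¹) * ((∫⁻ c', p a b c' ∂ρ) * pB⁻¹)
          = g a * p a b c * pB⁻¹ * ((∫⁻ c', p a b c' ∂ρ)⁻¹ * (∫⁻ c', p a b c' ∂ρ)) := by
            ring
        _ = g a * p a b c * pB⁻¹ := by
            rw [ENNReal.inv_mul_cancel h0.ne' hfin.ne, mul_one]
    rw [h1, lintegral_mul_const'' _ (f := fun a => g a * p a b c) (hg.mul hpabc).aemeasurable]
  have hnum := key f hf
  have hden : (∫⁻ a, (p a b c / ∫⁻ c', p a b c' ∂ρ) *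
      ((∫⁻ c', p a b c' ∂ρ) / pB) ∂μ) = pBC * pB⁻¹ := by
    have := key (fun _ => 1) measurable_const
    simpa [one_mul] using this
  rw [hnum, hden]
  -- now (X * pB⁻¹) / (pBC * pB⁻¹) = X / pBC
  rw [div_eq_mul_inv, ENNReal.mul_inv (Or.inl hBC.ne') (Or.inr (ENNReal.inv_ne_zero.mpr hB'.ne)), inv_inv]
  have : (∫⁻ a, f a * p a b c ∂μ) * pB⁻¹ * (pBC⁻¹ * pB)
      = (∫⁻ a, f a * p a b c ∂μ) * pBC⁻¹ * (pB⁻¹ * pB) := by ring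
  rw [this, ENNReal.inv_mul_cancel hB.ne' hB'.ne, mul_one,
    ← lintegral_mul_const'' _ (f := fun a => f a * p a b c) (hf.mul hpabc).aemeasurable]
  simp [div_eq_mul_inv, mul_assoc]
end
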